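/- arXiv:1603.07010 — 2 statements merged into one kernel-verified Lean document; each statement's English description precedes it below -/
import Mathlib

section
/- As n → ∞, the shaping gain of the n-dimensional ball, γ_s(⊗_n) = 1/(12 G(⊗_n)) = π(n+2)/(12 Γ(n/2+1)^{2/n}), converges to πe/6. -/
open Real Filter

/-- log of factorial via Stirling sequence. -/
private lemma log_factorial_eq (n : ℕ) (hn : 1 ≤ n) :
    Real.log (n.factorial : ℝ) = Real.log (Stirling.stirlingSeq n)
      + 1 / 2 * Real.log (2 * n) + n * (Real.log n - 1) := by
  have h := Stirling.log_stirlingSeq_formula n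
  have hn0 : (0:ℝ) < n := by exact_mod_cast hn
  rw [Real.log_div (ne_of_gt hn0) (Real.exp_ne_zero 1), Real.log_exp] at h
  linarith

private lemma log_two_le_one : Real.log 2 ≤ 1 := by
  nlinarith [Real.log_le_sub_one_of_pos (by norm_num : (0:ℝ) < 2)]

/-- Upper bound on `log Γ(x+1) - (x log x - x)`. -/
private lemma N_upper {x : ℝ} (hx : 2 ≤ x) :
    Real.log (Real.Gamma (x + 1)) - (x * Real.log x - x) ≤ 5 + 2 * Real.log x := by
  set m : ℕ := ⌊x⌋₊ with hm
  have hm2 : 2 ≤ m := Nat.le_floor (by exact_mod_cast hx)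
  have hmx : (m : ℝ) ≤ x := Nat.floor_le (by linarith)
  have hxm : x < (m : ℝ) + 1 := Nat.lt_floor_add_one x
  have hx0 : (0:ℝ) < x := by linarith
  have hlogx : (0:ℝ) ≤ Real.log x := Real.log_nonneg (by linarith)
  -- Γ(x+1) ≤ (m+1)!
  have hmono := Real.Gamma_strictMonoOn_Ici.monotoneOn
  have hG : Real.Gamma (x + 1) ≤ ((m+1).factorial : ℝ) := by
    have h1 : Real.Gamma (x + 1) ≤ Real.Gamma ((m : ℝ) + 2) := by
      apply hmono (Set.mem_Ici.mpr (by linarith)) (Set.mem_Ici.mpr (by push_cast; linarith))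
      linarith
    have h2 : Real.Gamma ((m : ℝ) + 2) = ((m+1).factorial : ℝ) := by
      have h3 : ((m : ℝ) + 2) = ((m+1 : ℕ) : ℝ) + 1 := by push_cast; ring
      rw [h3, Real.Gamma_nat_eq_factorial]
    linarith
  have hGpos : 0 < Real.Gamma (x + 1) := Real.Gamma_pos_of_pos (by linarith)
  have hlG : Real.log (Real.Gamma (x + 1)) ≤ Real.log (((m+1).factorial : ℝ)) :=
    Real.log_le_log hGpos hG
  rw [log_factorial_eq (m+1) (Nat.le_add_left 1 m)] at hlG
  push_cast at hlG
  -- bound the Stirling term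
  have b1 : Real.log (Stirling.stirlingSeq (m+1)) ≤ 1 := by
    have ha : Stirling.stirlingSeq (m+1) ≤ Stirling.stirlingSeq 1 :=
      Stirling.stirlingSeq'_antitone (Nat.zero_le m)
    have hb : Stirling.stirlingSeq 1 = Real.exp 1 / Real.sqrt 2 := Stirling.stirlingSeq_one
    have hs : (1:ℝ) ≤ Real.sqrt 2 := by
      rw [show (1:ℝ) = Real.sqrt 1 by simp]
      exact Real.sqrt_le_sqrt (by norm_num)
    have hc : Real.exp 1 / Real.sqrt 2 ≤ Real.exp 1 :=
      div_le_self (Real.exp_pos 1).le hs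
    have hpos : 0 < Stirling.stirlingSeq (m+1) := Stirling.stirlingSeq'_pos m
    have hle : Stirling.stirlingSeq (m+1) ≤ Real.exp 1 := by rw [hb] at ha; linarith
    calc Real.log (Stirling.stirlingSeq (m+1)) ≤ Real.log (Real.exp 1) :=
          Real.log_le_log hpos hle
      _ = 1 := Real.log_exp 1
  -- bound the log(2(m+1)) term
  have b2 : 1 / 2 * Real.log (2 * ((m:ℝ)+1)) ≤ 3/2 + 1/2 * Real.log x := by
    have h1 : Real.log (2 * ((m:ℝ)+1)) ≤ Real.log (4 * x) :=
      Real.log_le_log (by positivity) (by push_cast; linarith)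
    have h2 : Real.log (4 * x) = Real.log 4 + Real.log x :=
      Real.log_mul (by norm_num) (ne_of_gt hx0)
    have h3 : Real.log 4 ≤ 3 := by
      nlinarith [Real.log_le_sub_one_of_pos (by norm_num : (0:ℝ) < 4)]
    linarith
  -- bound (m+1)log(m+1) - x log x
  have b3 : ((m:ℝ)+1) * Real.log ((m:ℝ)+1) - x * Real.log x ≤ 2 + Real.log x := by
    have hm1pos : (0:ℝ) < (m:ℝ) + 1 := by positivity
    have hlm1 : Real.log ((m:ℝ)+1) ≤ Real.log (x+1) :=
      Real.log_le_log hm1pos (by linarith)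
    have t1 : ((m:ℝ)+1-x) * Real.log ((m:ℝ)+1) ≤ Real.log (x+1) := by
      have h0 : (0:ℝ) ≤ Real.log ((m:ℝ)+1) := Real.log_nonneg (by push_cast; linarith)
      calc ((m:ℝ)+1-x) * Real.log ((m:ℝ)+1) ≤ 1 * Real.log ((m:ℝ)+1) :=
            mul_le_mul_of_nonneg_right (by linarith) h0
        _ = Real.log ((m:ℝ)+1) := one_mul _
        _ ≤ Real.log (x+1) := hlm1
    have t2 : x * (Real.log ((m:ℝ)+1) - Real.log x) ≤ 1 := by
      have l2 : Real.log (x+1) - Real.log x = Real.log ((x+1)/x) :=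
        (Real.log_div (by linarith) (ne_of_gt hx0)).symm
      have l3 : Real.log ((x+1)/x) ≤ (x+1)/x - 1 :=
        Real.log_le_sub_one_of_pos (by positivity)
      have l4 : (x+1)/x - 1 = 1/x := by field_simp; ring
      have l5 : Real.log ((m:ℝ)+1) - Real.log x ≤ 1/x := by
        rw [l4] at l3; linarith [hlm1, l2, l3]
      calc x * (Real.log ((m:ℝ)+1) - Real.log x) ≤ x * (1/x) :=
            mul_le_mul_of_nonneg_left l5 hx0.le
        _ = 1 := by field_simp
    have hx1 : Real.log (x+1) ≤ 1 + Real.log x := by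
      have : Real.log (x+1) ≤ Real.log (2*x) := Real.log_le_log (by linarith) (by linarith)
      rw [Real.log_mul (by norm_num) (ne_of_gt hx0)] at this
      linarith [log_two_le_one]
    nlinarith [t1, t2]
  have b4 : x - ((m:ℝ)+1) ≤ 0 := by linarith
  nlinarith [hlG, b1, b2, b3, b4]

/-- Lower bound on `log Γ(x+1) - (x log x - x)`. -/
private lemma N_lower {a : ℝ} (ha : 0 < a)
    (hA : ∀ n : ℕ, a ≤ Stirling.stirlingSeq (n+1)) {x : ℝ} (hx : 2 ≤ x) :
    Real.log a - 1 - Real.log x ≤ Real.log (Real.Gamma (x + 1)) - (x * Real.log x - x) := by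
  set m : ℕ := ⌊x⌋₊ with hm
  have hm2 : 2 ≤ m := Nat.le_floor (by exact_mod_cast hx)
  have hmx : (m : ℝ) ≤ x := Nat.floor_le (by linarith)
  have hxm : x < (m : ℝ) + 1 := Nat.lt_floor_add_one x
  have hx0 : (0:ℝ) < x := by linarith
  have hm0 : (0:ℝ) < (m:ℝ) := by push_cast; linarith
  have hlogx : (0:ℝ) ≤ Real.log x := Real.log_nonneg (by linarith)
  -- m! ≤ Γ(x+1)
  have hmono := Real.Gamma_strictMonoOn_Ici.monotoneOn
  have hG : ((m.factorial : ℝ)) ≤ Real.Gamma (x + 1) := by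
    have h1 : Real.Gamma ((m : ℝ) + 1) ≤ Real.Gamma (x + 1) := by
      apply hmono (Set.mem_Ici.mpr (by push_cast; linarith)) (Set.mem_Ici.mpr (by linarith))
      linarith
    rw [Real.Gamma_nat_eq_factorial m] at h1
    exact h1
  have hfpos : (0:ℝ) < (m.factorial : ℝ) := by exact_mod_cast m.factorial_pos
  have hlG : Real.log ((m.factorial : ℝ)) ≤ Real.log (Real.Gamma (x + 1)) :=
    Real.log_le_log hfpos hG
  rw [log_factorial_eq m (le_trans one_le_two hm2)] at hlG
  -- stirling term lower bound
  have b1 : Real.log a ≤ Real.log (Stirling.stirlingSeq m) := by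
    have h1 : a ≤ Stirling.stirlingSeq m := by
      have := hA (m - 1)
      rwa [Nat.sub_add_cancel (le_trans one_le_two hm2)] at this
    exact Real.log_le_log ha h1
  have b2 : (0:ℝ) ≤ 1 / 2 * Real.log (2 * (m:ℝ)) := by
    have : (1:ℝ) ≤ 2 * (m:ℝ) := by linarith
    have := Real.log_nonneg this
    linarith
  -- x log x - m log m ≤ log x + 1
  have b3 : x * Real.log x - (m:ℝ) * Real.log (m:ℝ) ≤ Real.log x + 1 := by
    have hlmx : Real.log (m:ℝ) ≤ Real.log x := Real.log_le_log hm0 hmx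
    have t1 : (x - (m:ℝ)) * Real.log x ≤ Real.log x := by
      calc (x - (m:ℝ)) * Real.log x ≤ 1 * Real.log x :=
            mul_le_mul_of_nonneg_right (by linarith) hlogx
        _ = Real.log x := one_mul _
    have t2 : (m:ℝ) * (Real.log x - Real.log (m:ℝ)) ≤ x - (m:ℝ) := by
      have l2 : Real.log x - Real.log (m:ℝ) = Real.log (x / (m:ℝ)) :=
        (Real.log_div (ne_of_gt hx0) (ne_of_gt hm0)).symm
      have l3 : Real.log (x / (m:ℝ)) ≤ x / (m:ℝ) - 1 :=
        Real.log_le_sub_one_of_pos (by positivity)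
      calc (m:ℝ) * (Real.log x - Real.log (m:ℝ)) ≤ (m:ℝ) * (x / (m:ℝ) - 1) := by
            rw [l2]; exact mul_le_mul_of_nonneg_left l3 hm0.le
        _ = x - (m:ℝ) := by field_simp
    nlinarith [t1, t2]
  have b4 : (0:ℝ) ≤ x - (m:ℝ) := by linarith
  nlinarith [hlG, b1, b2, b3, b4]

/-- `(log Γ(x+1) - (x log x - x)) / x → 0`. -/
private lemma numer_tendsto :
    Tendsto (fun x : ℝ => (Real.log (Real.Gamma (x + 1)) - (x * Real.log x - x)) / x)
      atTop (nhds 0) := by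
  obtain ⟨a, ha, hA⟩ := Stirling.stirlingSeq'_bounded_by_pos_constant
  have hlog : Tendsto (fun x : ℝ => Real.log x / x) atTop (nhds 0) :=
    Real.isLittleO_log_id_atTop.tendsto_div_nhds_zero
  have hconst : ∀ c : ℝ, Tendsto (fun x : ℝ => c / x) atTop (nhds 0) := fun c =>
    tendsto_const_nhds.div_atTop tendsto_id
  have hlo : Tendsto (fun x : ℝ => (Real.log a - 1) / x - Real.log x / x) atTop (nhds 0) := by
    simpa using (hconst (Real.log a - 1)).sub hlog
  have hhi : Tendsto (fun x : ℝ => 5 / x + 2 * (Real.log x / x)) atTop (nhds 0) := by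
    simpa using (hconst 5).add (hlog.const_mul 2)
  apply tendsto_of_tendsto_of_tendsto_of_le_of_le' hlo hhi
  · filter_upwards [eventually_ge_atTop (2:ℝ)] with x hx
    have hx0 : (0:ℝ) < x := by linarith
    have := N_lower ha hA hx
    calc (Real.log a - 1) / x - Real.log x / x
        = (Real.log a - 1 - Real.log x) / x := by ring
      _ ≤ (Real.log (Real.Gamma (x + 1)) - (x * Real.log x - x)) / x := by gcongr
  · filter_upwards [eventually_ge_atTop (2:ℝ)] with x hx
    have hx0 : (0:ℝ) < x := by linarith
    have := N_upper hx
    calc (Real.log (Real.Gamma (x + 1)) - (x * Real.log x - x)) / x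
        ≤ (5 + 2 * Real.log x) / x := by gcongr
      _ = 5 / x + 2 * (Real.log x / x) := by ring

/-- `log Γ(x+1)/x - log x → -1`. -/
private lemma F_tendsto :
    Tendsto (fun x : ℝ => Real.log (Real.Gamma (x + 1)) / x - Real.log x)
      atTop (nhds (-1)) := by
  have h := numer_tendsto.sub_const 1
  rw [zero_sub] at h
  apply h.congr'
  filter_upwards [eventually_gt_atTop (0:ℝ)] with x hx
  field_simp
  ring

/-- The shaping gain of the `n`-dimensional ball,
`π(n+2)/(12 Γ(n/2+1)^{2/n})`, converges to `πe/6` as `n → ∞`. -/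
theorem stmt_16 :
    Tendsto (fun n : ℕ =>
        π * ((n : ℝ) + 2) / (12 * Real.Gamma ((n : ℝ) / 2 + 1) ^ ((2 : ℝ) / n)))
      atTop (nhds (π * Real.exp 1 / 6)) := by
  have hhalf : Tendsto (fun n : ℕ => (n : ℝ) / 2) atTop atTop :=
    tendsto_natCast_atTop_atTop.atTop_div_const (by norm_num)
  have hF : Tendsto (fun n : ℕ =>
      Real.log (Real.Gamma ((n : ℝ) / 2 + 1)) / ((n : ℝ) / 2) - Real.log ((n : ℝ) / 2))
      atTop (nhds (-1)) := F_tendsto.comp hhalf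
  have hexp : Tendsto (fun n : ℕ =>
      Real.exp (Real.log (Real.Gamma ((n : ℝ) / 2 + 1)) / ((n : ℝ) / 2) - Real.log ((n : ℝ) / 2)))
      atTop (nhds (Real.exp (-1))) := (Real.continuous_exp.tendsto _).comp hF
  have hone : Tendsto (fun n : ℕ => (1:ℝ) + 2 / n) atTop (nhds 1) := by
    simpa using tendsto_const_nhds.add (tendsto_const_div_atTop_nhds_zero_nat (2:ℝ))
  have hmain : Tendsto (fun n : ℕ =>
      π * ((1:ℝ) + 2 / n) / (6 * Real.exp (Real.log (Real.Gamma ((n : ℝ) / 2 + 1)) / ((n : ℝ) / 2)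
        - Real.log ((n : ℝ) / 2)))) atTop (nhds (π * Real.exp 1 / 6)) := by
    have h := (hone.const_mul π).div ((hexp.const_mul 6))
      (by positivity : (6:ℝ) * Real.exp (-1) ≠ 0)
    rw [Pi.div_def] at h
    convert h using 2
    rw [Real.exp_neg]
    field_simp
  apply hmain.congr'
  filter_upwards [eventually_ge_atTop 1] with n hn
  have hn0 : (0:ℝ) < (n:ℝ) := by exact_mod_cast hn
  have hGpos : 0 < Real.Gamma ((n : ℝ) / 2 + 1) := Real.Gamma_pos_of_pos (by positivity)
  have hrpow : Real.Gamma ((n : ℝ) / 2 + 1) ^ ((2 : ℝ) / n)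
      = Real.exp (Real.log (Real.Gamma ((n : ℝ) / 2 + 1)) * (2 / n)) := by
    rw [Real.rpow_def_of_pos hGpos]
  have hexpand : Real.exp (Real.log (Real.Gamma ((n : ℝ) / 2 + 1)) / ((n : ℝ) / 2)
      - Real.log ((n : ℝ) / 2))
      = Real.exp (Real.log (Real.Gamma ((n : ℝ) / 2 + 1)) * (2 / n)) / ((n:ℝ) / 2) := by
    rw [Real.exp_sub, Real.exp_log (by positivity)]
    congr 2
    field_simp
  rw [hexpand, hrpow]
  have hE : (0:ℝ) < Real.exp (Real.log (Real.Gamma ((n : ℝ) / 2 + 1)) * (2 / n)) :=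
    Real.exp_pos _
  field_simp
  ring
end

section
/- For any compact region R ⊆ ℝ^n of positive volume, the normalized second moment satisfies G(R) ≥ G(⊗) where ⊗ is the n-dimensional ball; equivalently the shaping loss λ_s(R) = G(R)/G(⊗) is at least 1. -/
open MeasureTheory Metric

section aux

variable {n : ℕ}

local notation "E" => EuclideanSpace ℝ (Fin n)

lemma my_finrank (n : ℕ) : Module.finrank ℝ (EuclideanSpace ℝ (Fin n)) = n := by
  simp [finrank_euclideanSpace]

lemma my_int (n : ℕ) (K : Set (EuclideanSpace ℝ (Fin n))) (hK : IsCompact K) :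
    IntegrableOn (fun x : EuclideanSpace ℝ (Fin n) => ‖x‖ ^ 2) K := by
  exact ((continuous_norm.pow 2).continuousOn).integrableOn_compact hK

lemma my_vol_ball (n : ℕ) {s : ℝ} (hs : 0 ≤ s) :
    volume (closedBall (0 : EuclideanSpace ℝ (Fin n)) s)
      = ENNReal.ofReal (s ^ n) * volume (closedBall (0 : EuclideanSpace ℝ (Fin n)) 1) := by
  simpa [my_finrank n] using
    Measure.addHaar_closedBall' (volume : Measure (EuclideanSpace ℝ (Fin n))) 0 hs

lemma my_int_ball_scale (n : ℕ) {s : ℝ} (hs : 0 < s) :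
    ∫ x in closedBall (0 : EuclideanSpace ℝ (Fin n)) s, ‖x‖ ^ 2
      = s ^ (n + 2) * ∫ x in closedBall (0 : EuclideanSpace ℝ (Fin n)) 1, ‖x‖ ^ 2 := by
  have h := Measure.setIntegral_comp_smul_of_pos
    (volume : Measure (EuclideanSpace ℝ (Fin n)))
    (fun x => ‖x‖ ^ 2) (closedBall (0 : EuclideanSpace ℝ (Fin n)) 1) hs
  rw [smul_unitClosedBall_of_nonneg hs.le, my_finrank n] at h
  have h2 : ∀ x : EuclideanSpace ℝ (Fin n), ‖s • x‖ ^ 2 = s ^ 2 * ‖x‖ ^ 2 := by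
    intro x
    rw [norm_smul, mul_pow, Real.norm_eq_abs, sq_abs]
  simp only [h2] at h
  rw [integral_const_mul] at h
  have := congrArg (fun t => s ^ n * t) h
  simp only at this
  rw [smul_eq_mul, mul_inv_cancel_left₀ (pow_ne_zero _ hs.ne')] at this
  rw [← this, add_comm n 2, pow_add]
  ring

end aux

lemma my_moment_mono (n : ℕ) {ρ : ℝ} (hρ : 0 < ρ) (R : Set (EuclideanSpace ℝ (Fin n)))
    (hR : IsCompact R)
    (hvol : volume R = volume (closedBall (0 : EuclideanSpace ℝ (Fin n)) ρ)) :
    ∫ x in closedBall (0 : EuclideanSpace ℝ (Fin n)) ρ, ‖x‖ ^ 2 ≤ ∫ x in R, ‖x‖ ^ 2 := by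
  set B := closedBall (0 : EuclideanSpace ℝ (Fin n)) ρ with hB
  have hBc : IsCompact B := isCompact_closedBall _ _
  have hBm : MeasurableSet B := measurableSet_closedBall
  have hRm : MeasurableSet R := hR.measurableSet
  have hiR : IntegrableOn (fun x : EuclideanSpace ℝ (Fin n) => ‖x‖ ^ 2) R volume := my_int n R hR
  have hiB : IntegrableOn (fun x : EuclideanSpace ℝ (Fin n) => ‖x‖ ^ 2) B volume := my_int n B hBc
  have hRfin : volume R ≠ ⊤ := hR.measure_lt_top.ne
  have hBfin : volume B ≠ ⊤ := hBc.measure_lt_top.ne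
  have hmeq : volume (R \ B) = volume (B \ R) := by
    have h1 : volume (R ∩ B) + volume (R \ B) = volume R := measure_inter_add_diff R hBm
    have h2 : volume (B ∩ R) + volume (B \ R) = volume B := measure_inter_add_diff B hRm
    rw [Set.inter_comm] at h2
    have hfin : volume (R ∩ B) ≠ ⊤ :=
      ((measure_mono Set.inter_subset_left).trans_lt hR.measure_lt_top).ne
    have : volume (R ∩ B) + volume (R \ B) = volume (R ∩ B) + volume (B \ R) := by
      rw [h1, h2, hvol]
    exact (ENNReal.add_right_inj hfin).mp this
  have key1 : ρ ^ 2 * (volume (R \ B)).toReal ≤ ∫ x in R \ B, ‖x‖ ^ 2 := by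
    have hint : IntegrableOn (fun _ : EuclideanSpace ℝ (Fin n) => ρ ^ 2) (R \ B) volume := by
      refine (integrableOn_const_iff).mpr (Or.inr ?_)
      exact (measure_mono Set.diff_subset).trans_lt hR.measure_lt_top
    have := setIntegral_mono_on hint (hiR.mono_set Set.diff_subset) (hRm.diff hBm)
      (fun x hx => by
        have hxB : ρ < ‖x‖ := by
          have := hx.2
          simp only [hB, mem_closedBall, dist_zero_right, not_le] at this
          exact this
        exact pow_le_pow_left₀ hρ.le hxB.le 2)
    simpa [setIntegral_const, smul_eq_mul, mul_comm, measureReal_def] using this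
  have key2 : ∫ x in B \ R, ‖x‖ ^ 2 ≤ ρ ^ 2 * (volume (B \ R)).toReal := by
    have hint : IntegrableOn (fun _ : EuclideanSpace ℝ (Fin n) => ρ ^ 2) (B \ R) volume := by
      refine (integrableOn_const_iff).mpr (Or.inr ?_)
      exact (measure_mono Set.diff_subset).trans_lt hBc.measure_lt_top
    have := setIntegral_mono_on (hiB.mono_set Set.diff_subset) hint (hBm.diff hRm)
      (fun x hx => by
        have hxB : ‖x‖ ≤ ρ := by
          have := hx.1
          simpa only [hB, mem_closedBall, dist_zero_right] using this
        exact pow_le_pow_left₀ (norm_nonneg x) hxB 2)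
    simpa [setIntegral_const, smul_eq_mul, mul_comm, measureReal_def] using this
  have hdR : (∫ x in R ∩ B, ‖x‖ ^ 2) + (∫ x in R \ B, ‖x‖ ^ 2) = ∫ x in R, ‖x‖ ^ 2 :=
    integral_inter_add_diff hBm hiR
  have hdB : (∫ x in B ∩ R, ‖x‖ ^ 2) + (∫ x in B \ R, ‖x‖ ^ 2) = ∫ x in B, ‖x‖ ^ 2 :=
    integral_inter_add_diff hRm hiB
  rw [Set.inter_comm] at hdB
  have htr : (volume (B \ R)).toReal = (volume (R \ B)).toReal := by rw [hmeq]
  calc ∫ x in B, ‖x‖ ^ 2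
      = (∫ x in R ∩ B, ‖x‖ ^ 2) + (∫ x in B \ R, ‖x‖ ^ 2) := hdB.symm
    _ ≤ (∫ x in R ∩ B, ‖x‖ ^ 2) + ρ ^ 2 * (volume (B \ R)).toReal := by linarith
    _ = (∫ x in R ∩ B, ‖x‖ ^ 2) + ρ ^ 2 * (volume (R \ B)).toReal := by rw [htr]
    _ ≤ (∫ x in R ∩ B, ‖x‖ ^ 2) + (∫ x in R \ B, ‖x‖ ^ 2) := by linarith
    _ = ∫ x in R, ‖x‖ ^ 2 := hdR

lemma my_G_ball (n : ℕ) (hn : 0 < n) {s : ℝ} (hs : 0 < s) :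
    (∫ x in closedBall (0 : EuclideanSpace ℝ (Fin n)) s, ‖x‖ ^ 2) /
        (volume (closedBall (0 : EuclideanSpace ℝ (Fin n)) s)).toReal /
        (volume (closedBall (0 : EuclideanSpace ℝ (Fin n)) s)).toReal ^ ((2 : ℝ) / n)
      = (∫ x in closedBall (0 : EuclideanSpace ℝ (Fin n)) 1, ‖x‖ ^ 2) /
        (volume (closedBall (0 : EuclideanSpace ℝ (Fin n)) 1)).toReal /
        (volume (closedBall (0 : EuclideanSpace ℝ (Fin n)) 1)).toReal ^ ((2 : ℝ) / n) := by
  set ω := (volume (closedBall (0 : EuclideanSpace ℝ (Fin n)) 1)).toReal with hωdef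
  have hω : 0 < ω :=
    ENNReal.toReal_pos (measure_closedBall_pos volume 0 one_pos).ne'
      (isCompact_closedBall _ _).measure_lt_top.ne
  have hto : (volume (closedBall (0 : EuclideanSpace ℝ (Fin n)) s)).toReal = s ^ n * ω := by
    rw [my_vol_ball n hs.le, ENNReal.toReal_mul, ENNReal.toReal_ofReal (pow_nonneg hs.le n)]
  have hpow : (s ^ n * ω) ^ ((2 : ℝ) / n) = s ^ 2 * ω ^ ((2 : ℝ) / n) := by
    rw [Real.mul_rpow (pow_nonneg hs.le n) hω.le]
    congr 1
    rw [← Real.rpow_natCast s n, ← Real.rpow_mul hs.le]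
    rw [show (n : ℝ) * ((2 : ℝ) / n) = 2 by
      field_simp]
    rw [show (2 : ℝ) = ((2 : ℕ) : ℝ) by norm_num, Real.rpow_natCast]
  rw [my_int_ball_scale n hs, hto, hpow, pow_add]
  have h1 : (s : ℝ) ^ n ≠ 0 := pow_ne_zero _ hs.ne'
  have h2 : (s : ℝ) ^ 2 ≠ 0 := pow_ne_zero _ hs.ne'
  have h3 : ω ≠ 0 := hω.ne'
  have h4 : ω ^ ((2 : ℝ) / n) ≠ 0 := (Real.rpow_pos_of_pos hω _).ne'
  field_simp

open Metric in
/-- The ball minimizes the normalized second moment: for any compact region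
`R ⊆ ℝ^n` of positive volume, `G(R) ≥ G(⊗)` where `⊗` is an `n`-ball. -/
theorem stmt_17 (n : ℕ) (hn : 0 < n) (R : Set (EuclideanSpace ℝ (Fin n)))
    (hR : IsCompact R) (hvol : 0 < volume R) (r : ℝ) (hr : 0 < r) :
    ((∫ x in Metric.closedBall (0 : EuclideanSpace ℝ (Fin n)) r, ‖x‖ ^ 2 / n) /
          (volume (Metric.closedBall (0 : EuclideanSpace ℝ (Fin n)) r)).toReal) /
        (volume (Metric.closedBall (0 : EuclideanSpace ℝ (Fin n)) r)).toReal ^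
          ((2 : ℝ) / n) ≤
      ((∫ x in R, ‖x‖ ^ 2 / n) / (volume R).toReal) /
        (volume R).toReal ^ ((2 : ℝ) / n) := by
  have hωfin : volume (closedBall (0 : EuclideanSpace ℝ (Fin n)) 1) ≠ ⊤ :=
    (isCompact_closedBall (0 : EuclideanSpace ℝ (Fin n)) 1).measure_lt_top.ne
  have hω : 0 < (volume (closedBall (0 : EuclideanSpace ℝ (Fin n)) 1)).toReal :=
    ENNReal.toReal_pos
      (measure_closedBall_pos volume (0 : EuclideanSpace ℝ (Fin n)) one_pos).ne' hωfin
  set ω := (volume (closedBall (0 : EuclideanSpace ℝ (Fin n)) 1)).toReal with hωdef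
  have hRfin : volume R ≠ ⊤ := hR.measure_lt_top.ne
  have hVR : 0 < (volume R).toReal := ENNReal.toReal_pos hvol.ne' hRfin
  set VR := (volume R).toReal with hVRdef
  have hx : 0 < VR / ω := div_pos hVR hω
  set ρ : ℝ := (VR / ω) ^ ((n : ℝ)⁻¹) with hρdef
  have hρ : 0 < ρ := Real.rpow_pos_of_pos hx _
  have hnR : (n : ℝ) ≠ 0 := Nat.cast_ne_zero.mpr hn.ne'
  have hρn : ρ ^ n = VR / ω := by
    rw [hρdef, ← Real.rpow_natCast ((VR / ω) ^ ((n : ℝ)⁻¹)) n, ← Real.rpow_mul hx.le,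
      inv_mul_cancel₀ hnR, Real.rpow_one]
  have hvolρ : volume (closedBall (0 : EuclideanSpace ℝ (Fin n)) ρ) = volume R := by
    rw [my_vol_ball n hρ.le, hρn, ← ENNReal.ofReal_toReal hωfin, ← ENNReal.ofReal_mul hx.le,
      div_mul_cancel₀ _ hω.ne', hVRdef, ENNReal.ofReal_toReal hRfin]
  have hVρ : (volume (closedBall (0 : EuclideanSpace ℝ (Fin n)) ρ)).toReal = VR := by
    rw [hvolρ]
  have hmm := my_moment_mono n hρ R hR hvolρ.symm
  have hGρ := my_G_ball n hn hρ
  rw [hVρ] at hGρ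
  have main : (∫ x in closedBall (0 : EuclideanSpace ℝ (Fin n)) r, ‖x‖ ^ 2) /
        (volume (closedBall (0 : EuclideanSpace ℝ (Fin n)) r)).toReal /
        (volume (closedBall (0 : EuclideanSpace ℝ (Fin n)) r)).toReal ^ ((2 : ℝ) / n)
      ≤ (∫ x in R, ‖x‖ ^ 2) / VR / VR ^ ((2 : ℝ) / n) := by
    rw [my_G_ball n hn hr, ← hGρ]
    gcongr
  have hir : ∀ (s : Set (EuclideanSpace ℝ (Fin n))),
      (∫ x in s, ‖x‖ ^ 2 / (n : ℝ)) = (∫ x in s, ‖x‖ ^ 2) / (n : ℝ) := fun s =>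
    integral_div _ _
  rw [hir, hir]
  have e1 : ∀ (a b c : ℝ), a / (n : ℝ) / b / c = (a / b / c) / (n : ℝ) := by
    intro a b c; ring
  rw [e1, e1]
  gcongr
end
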